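/- (MSE of the doubly robust estimator.) Fix a reward kernel D with mean reward r*(x,a) and conditional variance σ(x,a)² (both with finite second moments under P_μ after weighting by ρ), and a fixed measurable reward model r̂ : X×A → ℝ. Define the doubly robust estimator on n i.i.d. samples from P_μ^D by v̂_DR = (1/n)·Σ_{i=1}^n [ ρ(x_i,a_i)·(r_i − r̂(x_i,a_i)) + Σ_{a∈A} π(a|x_i)·r̂(x_i,a) ]. Then E[(v̂_DR − v^π(D))²] = (1/n)·( E_μ[ρ²σ²] + Var_{x∼λ}( E_{a∼μ(·|x)}[ρ(x,a)·r*(x,a)] ) + E_{x∼λ}[ Var_{a∼μ(·|x)}( ρ(x,a)·(r̂(x,a) − r*(x,a)) ) ] ). -/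

import Mathlib

open MeasureTheory ProbabilityTheory Real
open scoped ENNReal BigOperators Classical

/-- A policy assigns to each context a probability mass function over actions. -/
structure Policy (X A : Type*) [MeasurableSpace X] [Fintype A] where
  prob : X → A → ℝ
  nonneg : ∀ x a, 0 ≤ prob x a
  sum_one : ∀ x, ∑ a, prob x a = 1
  meas : ∀ a, Measurable fun x => prob x a

variable {X A : Type*} [MeasurableSpace X] [Fintype A] [Nonempty A]
  [MeasurableSpace A] [MeasurableSingletonClass A]

/-- Importance weight ρ(x,a) = π(a|x)/μ(a|x). -/
noncomputable def impW (μp πp : Policy X A) (p : X × A) : ℝ :=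
  πp.prob p.1 p.2 / μp.prob p.1 p.2

/-- E_μ[f] : expectation of f(x,a) for x ∼ λ, a ∼ μ(·|x). -/
noncomputable def Emu (lam : Measure X) (μp : Policy X A) (f : X × A → ℝ) : ℝ :=
  ∫ x, ∑ a, μp.prob x a * f (x, a) ∂lam

/-- The distribution P_μ of (x,a) with x ∼ λ, a ∼ μ(·|x). -/
noncomputable def Policy.joint (lam : Measure X) (μp : Policy X A) : Measure (X × A) :=
  lam.bind fun x => Measure.sum fun a : A => ENNReal.ofReal (μp.prob x a) • Measure.dirac (x, a)

/-- Mean reward r*(x,a) of a reward kernel. -/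
noncomputable def rstar (D : Kernel (X × A) ℝ) (p : X × A) : ℝ := ∫ r, r ∂(D p)

/-- The value of the target policy π. -/
noncomputable def vpi (lam : Measure X) (πp : Policy X A) (D : Kernel (X × A) ℝ) : ℝ :=
  ∫ x, ∑ a, πp.prob x a * rstar D (x, a) ∂lam

/-- The joint distribution P_μ^D of ((x,a),r): x ∼ λ, a ∼ μ(·|x), r ∼ D(·|x,a). -/
noncomputable def sampleMeasure (lam : Measure X) (μp : Policy X A) (D : Kernel (X × A) ℝ) :
    Measure ((X × A) × ℝ) :=
  (Policy.joint lam μp).bind fun p => (D p).map fun r => (p, r)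

/-- The class R(σ,Rmax) of reward kernels: Markov kernels with finite second moments such
that P_μ-a.s. 0 ≤ r*(x,a) ≤ Rmax(x,a) and Var(r|x,a) ≤ σ(x,a)². -/
def InRewardClass (lam : Measure X) (μp : Policy X A) (σf Rmax : X × A → ℝ)
    (D : Kernel (X × A) ℝ) : Prop :=
  IsMarkovKernel D ∧ (∀ p, Integrable (fun r => r ^ 2) (D p)) ∧
    (∀ᵐ p ∂Policy.joint lam μp,
      0 ≤ rstar D p ∧ rstar D p ≤ Rmax p ∧ variance id (D p) ≤ σf p ^ 2)

/-- Minimax risk of off-policy evaluation from n i.i.d. samples. -/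
noncomputable def minimaxRisk (lam : Measure X) (μp πp : Policy X A)
    (σf Rmax : X × A → ℝ) (n : ℕ) : ℝ≥0∞ :=
  ⨅ (vhat : (Fin n → (X × A) × ℝ) → ℝ) (_ : Measurable vhat),
    ⨆ (D : Kernel (X × A) ℝ) (_ : InRewardClass lam μp σf Rmax D),
      ∫⁻ ω, ENNReal.ofReal ((vhat ω - vpi lam πp D) ^ 2)
        ∂(Measure.pi fun _ : Fin n => sampleMeasure lam μp D)

/-- The doubly robust estimator with reward model r̂ on n samples. -/
noncomputable def drEst (μp πp : Policy X A) (rhat : X × A → ℝ) (n : ℕ)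
    (ω : Fin n → (X × A) × ℝ) : ℝ :=
  (1 / n : ℝ) * ∑ i, (impW μp πp (ω i).1 * ((ω i).2 - rhat (ω i).1)
    + ∑ a, πp.prob (ω i).1.1 a * rhat ((ω i).1.1, a))

section PiEval

variable {ι : Type*} [Fintype ι] {Ω : Type*} [MeasurableSpace Ω]

lemma pi_eval_preimage (μs : ι → Measure Ω) [∀ i, IsProbabilityMeasure (μs i)] (i : ι)
    {s : Set Ω} (hs : MeasurableSet s) :
    Measure.pi μs ((fun ω => ω i) ⁻¹' s) = μs i s := by
  classical
  have hset : ((fun ω : ι → Ω => ω i) ⁻¹' s)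
      = Set.pi Set.univ (Function.update (fun _ : ι => (Set.univ : Set Ω)) i s) := by
    ext ω
    simp only [Set.mem_preimage, Set.mem_pi, Set.mem_univ, true_implies]
    constructor
    · intro h k
      by_cases hk : k = i
      · subst hk; simpa using h
      · simp [Function.update_of_ne hk]
    · intro h
      have := h i
      simpa using this
  rw [hset, Measure.pi_pi]
  rw [Finset.prod_eq_single i (fun b _ hb => by
    simp [Function.update_of_ne hb]) (fun h => absurd (Finset.mem_univ i) h)]
  simp

lemma pi_eval_preimage_inter (μs : ι → Measure Ω) [∀ i, IsProbabilityMeasure (μs i)]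
    {i j : ι} (hij : i ≠ j) {s t : Set Ω} (hs : MeasurableSet s) (ht : MeasurableSet t) :
    Measure.pi μs ((fun ω => ω i) ⁻¹' s ∩ (fun ω => ω j) ⁻¹' t) = μs i s * μs j t := by
  classical
  set F := Function.update (Function.update (fun _ : ι => (Set.univ : Set Ω)) i s) j t with hF
  have hset : ((fun ω : ι → Ω => ω i) ⁻¹' s ∩ (fun ω : ι → Ω => ω j) ⁻¹' t)
      = Set.pi Set.univ F := by
    ext ω
    simp only [Set.mem_inter_iff, Set.mem_preimage, Set.mem_pi, Set.mem_univ, true_implies, hF]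
    constructor
    · rintro ⟨h1, h2⟩ k
      by_cases hkj : k = j
      · subst hkj; simp [h2]
      · by_cases hki : k = i
        · subst hki; simp [Function.update_of_ne hkj, h1]
        · simp [Function.update_of_ne hkj, Function.update_of_ne hki]
    · intro h
      refine ⟨?_, ?_⟩
      · have := h i
        simpa [Function.update_of_ne hij] using this
      · have := h j
        simpa using this
  rw [hset, Measure.pi_pi]
  rw [← Finset.prod_subset (Finset.subset_univ ({i, j} : Finset ι)) (fun k _ hk => by
    simp only [Finset.mem_insert, Finset.mem_singleton, not_or] at hk
    simp [hF, Function.update_of_ne hk.2, Function.update_of_ne hk.1])]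
  rw [Finset.prod_pair hij]
  simp [hF, Function.update_of_ne hij]

lemma indepFun_eval (μs : ι → Measure Ω) [∀ i, IsProbabilityMeasure (μs i)]
    {i j : ι} (hij : i ≠ j) :
    IndepFun (fun ω : ι → Ω => ω i) (fun ω : ι → Ω => ω j) (Measure.pi μs) := by
  rw [indepFun_iff_measure_inter_preimage_eq_mul]
  intro s t hs ht
  rw [pi_eval_preimage_inter μs hij hs ht, pi_eval_preimage μs i hs, pi_eval_preimage μs j ht]

lemma measurePreserving_eval' (μs : ι → Measure Ω) [∀ i, IsProbabilityMeasure (μs i)] (i : ι) :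
    MeasurePreserving (fun ω : ι → Ω => ω i) (Measure.pi μs) (μs i) :=
  ⟨measurable_pi_apply i, Measure.ext fun s hs => by
    rw [Measure.map_apply (measurable_pi_apply i) hs, pi_eval_preimage μs i hs]⟩

end PiEval
section SampleStructure

lemma measurable_prod_policy {f : X → A → ℝ} (h : ∀ a, Measurable fun x => f x a) :
    Measurable fun p : X × A => f p.1 p.2 := by
  have heq : (fun p : X × A => f p.1 p.2)
      = fun p => ∑ a, if p.2 = a then f p.1 a else 0 := by
    funext p
    simp
  rw [heq]
  exact Finset.measurable_sum _ fun a _ =>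
    Measurable.ite (measurable_snd (measurableSet_singleton a)) ((h a).comp measurable_fst)
      measurable_const

lemma measurable_impW (μp πp : Policy X A) : Measurable (impW μp πp) :=
  (measurable_prod_policy πp.meas).div (measurable_prod_policy μp.meas)

lemma prob_le_one (μp : Policy X A) (x : X) (a : A) : μp.prob x a ≤ 1 := by
  calc μp.prob x a ≤ ∑ b, μp.prob x b :=
        Finset.single_le_sum (fun b _ => μp.nonneg x b) (Finset.mem_univ a)
    _ = 1 := μp.sum_one x

/-- the measure λ weighted by μ(a|·). -/
noncomputable def nuA (lam : Measure X) (μp : Policy X A) (a : A) : Measure X :=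
  lam.withDensity fun x => ENNReal.ofReal (μp.prob x a)

/-- the section kernel x ↦ D(x,a). -/
noncomputable def KA (D : Kernel (X × A) ℝ) (a : A) : Kernel X ℝ :=
  D.comap (fun x => (x, a)) (measurable_id.prodMk measurable_const)

instance KA.isMarkovKernel (D : Kernel (X × A) ℝ) [IsMarkovKernel D] (a : A) :
    IsMarkovKernel (KA D a) := by
  rw [KA]; infer_instance

instance nuA.isFiniteMeasure (lam : Measure X) [IsFiniteMeasure lam] (μp : Policy X A) (a : A) :
    IsFiniteMeasure (nuA lam μp a) := by
  constructor
  rw [nuA, withDensity_apply _ MeasurableSet.univ, setLIntegral_univ]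
  calc ∫⁻ x, ENNReal.ofReal (μp.prob x a) ∂lam ≤ ∫⁻ _, 1 ∂lam :=
        lintegral_mono fun x => by
          simpa using ENNReal.ofReal_le_one.2 (prob_le_one μp x a)
    _ = lam Set.univ := by simp
    _ < ⊤ := measure_lt_top _ _

lemma measurable_bindKernel (D : Kernel (X × A) ℝ) [IsSFiniteKernel D] :
    Measurable fun p : X × A => (D p).map fun r => (p, r) := by
  refine Measure.measurable_of_measurable_coe _ fun s hs => ?_
  simp_rw [Measure.map_apply measurable_prodMk_left hs]
  exact Kernel.measurable_kernel_prodMk_left hs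

lemma measurable_sumdirac (μp : Policy X A) :
    Measurable fun x : X => Measure.sum fun a : A =>
      ENNReal.ofReal (μp.prob x a) • Measure.dirac ((x, a) : X × A) := by
  refine Measure.measurable_of_measurable_coe _ fun s hs => ?_
  simp_rw [Measure.sum_apply _ hs, Measure.smul_apply, smul_eq_mul]
  refine Measurable.ennreal_tsum fun a => ?_
  refine Measurable.mul (ENNReal.measurable_ofReal.comp (μp.meas a)) ?_
  simp_rw [Measure.dirac_apply' _ hs]
  exact (measurable_one.indicator hs).comp (measurable_id.prodMk measurable_const)

lemma sample_eq (lam : Measure X) [IsFiniteMeasure lam] (μp : Policy X A) (D : Kernel (X × A) ℝ)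
    [IsMarkovKernel D] :
    sampleMeasure lam μp D = Measure.sum fun a : A =>
      ((nuA lam μp a) ⊗ₘ (KA D a)).map fun q : X × ℝ => ((q.1, a), q.2) := by
  ext s hs
  have hg := measurable_bindKernel D
  have hgs : Measurable fun p : X × A => ((D p).map fun r => (p, r)) s :=
    (Measure.measurable_coe hs).comp hg
  have hDs : Measurable fun p : X × A => D p (Prod.mk p ⁻¹' s) :=
    Kernel.measurable_kernel_prodMk_left hs
  rw [sampleMeasure, Policy.joint, Measure.bind_apply hs hg.aemeasurable,
    Measure.lintegral_bind (measurable_sumdirac μp).aemeasurable hgs.aemeasurable]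
  have hL : ∀ x : X, (∫⁻ p, ((D p).map fun r => (p, r)) s
        ∂(Measure.sum fun a : A => ENNReal.ofReal (μp.prob x a) • Measure.dirac (x, a)))
      = ∑' a : A, ENNReal.ofReal (μp.prob x a) * D (x, a) (Prod.mk (x, a) ⁻¹' s) := by
    intro x
    rw [lintegral_sum_measure]
    refine tsum_congr fun a => ?_
    rw [lintegral_smul_measure, lintegral_dirac' _ hgs,
      Measure.map_apply measurable_prodMk_left hs, smul_eq_mul]
  simp_rw [hL]
  have hterm : ∀ a : A, Measurable fun x : X =>
      ENNReal.ofReal (μp.prob x a) * D (x, a) (Prod.mk (x, a) ⁻¹' s) := fun a =>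
    (ENNReal.measurable_ofReal.comp (μp.meas a)).mul
      (hDs.comp (measurable_id.prodMk measurable_const))
  rw [lintegral_tsum fun a => (hterm a).aemeasurable]
  rw [Measure.sum_apply _ hs]
  refine tsum_congr fun a => ?_
  have hme : Measurable fun q : X × ℝ => (((q.1, a), q.2) : (X × A) × ℝ) :=
    (measurable_fst.prodMk measurable_const).prodMk measurable_snd
  have hof : Measurable fun x : X => ENNReal.ofReal (μp.prob x a) :=
    ENNReal.measurable_ofReal.comp (μp.meas a)
  rw [Measure.map_apply hme hs, Measure.compProd_apply (hme hs), nuA,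
    lintegral_withDensity_eq_lintegral_mul _ hof
      (by
        have : (fun x => (KA D a) x (Prod.mk x ⁻¹' ((fun q : X × ℝ => (((q.1, a), q.2))) ⁻¹' s)))
            = fun x => D (x, a) (Prod.mk (x, a) ⁻¹' s) := by
          funext x
          simp only [KA, Kernel.comap_apply]
          rfl
        rw [this]
        exact hDs.comp (measurable_id.prodMk measurable_const))]
  refine lintegral_congr fun x => ?_
  simp only [Pi.mul_apply]
  congr 1

end SampleStructure
section SampleIntegral

lemma sampleMeasure_isProbability (lam : Measure X) [IsProbabilityMeasure lam]
    (μp : Policy X A) (D : Kernel (X × A) ℝ) [IsMarkovKernel D] :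
    IsProbabilityMeasure (sampleMeasure lam μp D) := by
  constructor
  rw [sample_eq lam μp D, Measure.sum_apply _ MeasurableSet.univ]
  have : ∀ a : A, (((nuA lam μp a) ⊗ₘ (KA D a)).map
      fun q : X × ℝ => ((q.1, a), q.2)) Set.univ = nuA lam μp a Set.univ := by
    intro a
    rw [Measure.map_apply ((measurable_fst.prodMk measurable_const).prodMk measurable_snd)
      MeasurableSet.univ]
    simp only [Set.preimage_univ]
    exact Measure.compProd_apply_univ
  simp_rw [this, nuA, withDensity_apply _ MeasurableSet.univ, setLIntegral_univ, tsum_fintype]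
  have hof : ∀ a : A, Measurable fun x : X => ENNReal.ofReal (μp.prob x a) := fun a =>
    ENNReal.measurable_ofReal.comp (μp.meas a)
  rw [← lintegral_finset_sum _ fun a _ => hof a]
  have : ∀ x : X, (∑ a : A, ENNReal.ofReal (μp.prob x a)) = 1 := by
    intro x
    rw [← ENNReal.ofReal_sum_of_nonneg fun a _ => μp.nonneg x a, μp.sum_one x,
      ENNReal.ofReal_one]
  simp_rw [this]
  simp

lemma integral_sample (lam : Measure X) [IsProbabilityMeasure lam] (μp : Policy X A)
    (D : Kernel (X × A) ℝ) [IsMarkovKernel D]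
    {f : (X × A) × ℝ → ℝ} (hf : Integrable f (sampleMeasure lam μp D)) :
    (∀ a : A, Integrable (fun x => μp.prob x a * ∫ r, f ((x, a), r) ∂(D (x, a))) lam) ∧
    ∫ s, f s ∂(sampleMeasure lam μp D)
      = ∫ x, ∑ a, μp.prob x a * ∫ r, f ((x, a), r) ∂(D (x, a)) ∂lam := by
  have he : ∀ a : A, Measurable fun q : X × ℝ => (((q.1, a), q.2) : (X × A) × ℝ) :=
    fun a => (measurable_fst.prodMk measurable_const).prodMk measurable_snd
  have hsum : Integrable f (Measure.sum fun a : A =>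
      ((nuA lam μp a) ⊗ₘ (KA D a)).map fun q : X × ℝ => ((q.1, a), q.2)) := by
    rwa [← sample_eq lam μp D]
  have hfa : ∀ a : A, Integrable f
      (((nuA lam μp a) ⊗ₘ (KA D a)).map fun q : X × ℝ => ((q.1, a), q.2)) :=
    fun a => hsum.mono_measure (Measure.le_sum _ a)
  have hfea : ∀ a : A, Integrable (fun q : X × ℝ => f ((q.1, a), q.2))
      ((nuA lam μp a) ⊗ₘ (KA D a)) := fun a =>
    (integrable_map_measure (hfa a).1 (he a).aemeasurable).mp (hfa a)
  have hIa : ∀ a : A, Integrable (fun x => ∫ r, f ((x, a), r) ∂(D (x, a))) (nuA lam μp a) := by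
    intro a
    have h := hfea a
    rw [Measure.compProd] at h
    have h2 := h.integral_compProd
    simp only [Kernel.prodMkLeft_apply, Kernel.const_apply, KA, Kernel.comap_apply] at h2
    exact h2
  have hnu : ∀ a : A, nuA lam μp a
      = lam.withDensity fun x => ((μp.prob x a).toNNReal : ℝ≥0∞) := fun a => rfl
  have htn : ∀ a : A, Measurable fun x => (μp.prob x a).toNNReal :=
    fun a => (μp.meas a).real_toNNReal
  have hmul : ∀ a : A,
      Integrable (fun x => μp.prob x a * ∫ r, f ((x, a), r) ∂(D (x, a))) lam := by
    intro a
    have h := hIa a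
    rw [hnu a] at h
    have h2 := (integrable_withDensity_iff_integrable_smul (htn a)).mp h
    refine h2.congr (Filter.Eventually.of_forall fun x => ?_)
    simp only [NNReal.smul_def, smul_eq_mul, Real.coe_toNNReal _ (μp.nonneg x a)]
  refine ⟨hmul, ?_⟩
  rw [sample_eq lam μp D, integral_sum_measure hsum, tsum_fintype]
  have hterm : ∀ a : A, ∫ s, f s ∂(((nuA lam μp a) ⊗ₘ (KA D a)).map
        fun q : X × ℝ => ((q.1, a), q.2))
      = ∫ x, μp.prob x a * ∫ r, f ((x, a), r) ∂(D (x, a)) ∂lam := by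
    intro a
    rw [integral_map (he a).aemeasurable (hfa a).1, Measure.integral_compProd (hfea a)]
    simp only [KA, Kernel.comap_apply]
    rw [hnu a, integral_withDensity_eq_integral_smul (htn a)]
    refine integral_congr_ae (Filter.Eventually.of_forall fun x => ?_)
    simp only [NNReal.smul_def, smul_eq_mul, Real.coe_toNNReal _ (μp.nonneg x a)]
  simp_rw [hterm]
  exact (integral_finset_sum _ fun a _ => hmul a).symm

end SampleIntegral
/-- Lemma 3.3(i) of Dudík et al.: exact MSE of the DR estimator. -/
theorem dr_mse
    (lam : Measure X) [IsProbabilityMeasure lam] (μp πp : Policy X A)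
    (habs : ∀ x a, 0 < πp.prob x a → 0 < μp.prob x a)
    (D : Kernel (X × A) ℝ) [IsMarkovKernel D]
    (hD2 : ∀ p, Integrable (fun r => r ^ 2) (D p))
    (rhat : X × A → ℝ) (hrm : Measurable rhat)
    (n : ℕ) (hn : 0 < n)
    (h1 : MemLp (fun s : (X × A) × ℝ => impW μp πp s.1 * (s.2 - rhat s.1)
        + ∑ a, πp.prob s.1.1 a * rhat (s.1.1, a)) 2 (sampleMeasure lam μp D))
    (h2 : MemLp (fun x => ∑ a, μp.prob x a * (impW μp πp (x, a) * rstar D (x, a))) 2 lam)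
    (h3 : Integrable (fun x => ∑ a, μp.prob x a *
      (impW μp πp (x, a) ^ 2 * variance id (D (x, a)))) lam)
    (h4 : Integrable (fun x =>
      (∑ a, μp.prob x a * (impW μp πp (x, a) * (rhat (x, a) - rstar D (x, a))) ^ 2)
        - (∑ a, μp.prob x a * (impW μp πp (x, a) * (rhat (x, a) - rstar D (x, a)))) ^ 2) lam)
    (hvpi : Integrable (fun x => ∑ a, πp.prob x a * rstar D (x, a)) lam)
    (hsq : Integrable (fun ω => (drEst μp πp rhat n ω - vpi lam πp D) ^ 2)
      (Measure.pi fun _ : Fin n => sampleMeasure lam μp D)) :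
    (∫ ω, (drEst μp πp rhat n ω - vpi lam πp D) ^ 2
        ∂(Measure.pi fun _ : Fin n => sampleMeasure lam μp D))
      = (1 / n) *
        (Emu lam μp (fun p => impW μp πp p ^ 2 * variance id (D p))
          + variance (fun x => ∑ a, μp.prob x a * (impW μp πp (x, a) * rstar D (x, a))) lam
          + ∫ x,
              ((∑ a, μp.prob x a * (impW μp πp (x, a) * (rhat (x, a) - rstar D (x, a))) ^ 2)
                - (∑ a, μp.prob x a *
                    (impW μp πp (x, a) * (rhat (x, a) - rstar D (x, a)))) ^ 2) ∂lam) := by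
  classical
  haveI hPprob : IsProbabilityMeasure (sampleMeasure lam μp D) :=
    sampleMeasure_isProbability lam μp D
  have hn0 : (n : ℝ) ≠ 0 := Nat.cast_ne_zero.mpr hn.ne'
  set f : (X × A) × ℝ → ℝ := fun s : (X × A) × ℝ => impW μp πp s.1 * (s.2 - rhat s.1)
      + ∑ a, πp.prob s.1.1 a * rhat (s.1.1, a) with hfdef
  set P := sampleMeasure lam μp D with hPdef
  have hfmeas : Measurable f := by
    rw [hfdef]
    refine Measurable.add ?_ ?_
    · exact (((measurable_impW μp πp).comp measurable_fst)).mul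
        (measurable_snd.sub (hrm.comp measurable_fst))
    · exact Finset.measurable_sum _ fun a _ =>
        ((πp.meas a).comp (measurable_fst.comp measurable_fst)).mul
          (hrm.comp ((measurable_fst.comp measurable_fst).prodMk measurable_const))
  have hf1 : Integrable f P := h1.integrable one_le_two
  have hf2 : Integrable (fun s => f s ^ 2) P := h1.integrable_sq
  -- importance-weight identity
  have hpw : ∀ x a, μp.prob x a * impW μp πp (x, a) = πp.prob x a := by
    intro x a
    by_cases h : 0 < μp.prob x a
    · rw [impW]
      field_simp
    · have hμ0 : μp.prob x a = 0 := le_antisymm (not_lt.1 h) (μp.nonneg x a)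
      have hπ0 : πp.prob x a = 0 := by
        by_contra hne
        exact h (habs x a (lt_of_le_of_ne (πp.nonneg x a) (Ne.symm hne)))
      simp [hμ0, hπ0]
  -- second moments of the reward distributions
  have hDmem : ∀ p : X × A, MemLp id 2 (D p) := fun p =>
    (memLp_two_iff_integrable_sq aestronglyMeasurable_id).mpr (by simpa using hD2 p)
  have hDid : ∀ p : X × A, Integrable (fun r : ℝ => r) (D p) := fun p =>
    (hDmem p).integrable one_le_two
  have hvar : ∀ p : X × A, variance id (D p) = (∫ r, r ^ 2 ∂D p) - (rstar D p) ^ 2 := by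
    intro p
    rw [variance_eq_sub (hDmem p)]
    rfl
  -- conditional mean of f
  have hmean : ∀ x a, (∫ r, f ((x, a), r) ∂D (x, a))
      = impW μp πp (x, a) * (rstar D (x, a) - rhat (x, a))
        + (∑ b, πp.prob x b * rhat (x, b)) := by
    intro x a
    have hcalc : (fun r : ℝ => f ((x, a), r))
        = fun r : ℝ => impW μp πp (x, a) * (r - rhat (x, a))
          + (∑ b, πp.prob x b * rhat (x, b)) := by
      funext r
      rw [hfdef]
    have hlin : Integrable (fun r : ℝ => impW μp πp (x, a) * (r - rhat (x, a))) (D (x, a)) :=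
      ((hDid _).sub (integrable_const _)).const_mul _
    rw [hcalc, integral_add hlin (integrable_const _), integral_const_mul,
      integral_sub (hDid _) (integrable_const _), integral_const]
    simp [rstar]
  -- conditional second moment of f
  have hsqr : ∀ x a, (∫ r, (f ((x, a), r)) ^ 2 ∂D (x, a))
      = impW μp πp (x, a) ^ 2 * variance id (D (x, a))
        + (impW μp πp (x, a) * (rstar D (x, a) - rhat (x, a))
            + (∑ b, πp.prob x b * rhat (x, b))) ^ 2 := by
    intro x a
    have hcalc : (fun r : ℝ => (f ((x, a), r)) ^ 2)
        = fun r : ℝ => impW μp πp (x, a) ^ 2 * r ^ 2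
          + (2 * impW μp πp (x, a) * ((∑ b, πp.prob x b * rhat (x, b))
              - impW μp πp (x, a) * rhat (x, a))) * r
          + ((∑ b, πp.prob x b * rhat (x, b)) - impW μp πp (x, a) * rhat (x, a)) ^ 2 := by
      funext r
      rw [hfdef]
      ring
    have hq1 : Integrable (fun r : ℝ => impW μp πp (x, a) ^ 2 * r ^ 2) (D (x, a)) :=
      (hD2 _).const_mul _
    have hq2 : Integrable (fun r : ℝ => (2 * impW μp πp (x, a)
        * ((∑ b, πp.prob x b * rhat (x, b)) - impW μp πp (x, a) * rhat (x, a))) * r) (D (x, a)) :=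
      (hDid _).const_mul _
    have hq12 : Integrable (fun r : ℝ => impW μp πp (x, a) ^ 2 * r ^ 2
        + (2 * impW μp πp (x, a)
          * ((∑ b, πp.prob x b * rhat (x, b)) - impW μp πp (x, a) * rhat (x, a))) * r)
        (D (x, a)) := hq1.add hq2
    rw [hcalc, integral_add hq12 (integrable_const _), integral_add hq1 hq2,
      integral_const_mul, integral_const_mul, integral_const, hvar (x, a),
      show (∫ r, r ∂D (x, a)) = rstar D (x, a) from rfl]
    simp only [probReal_univ, one_smul]
    ring
  -- sum of conditional means
  have hGsum : ∀ x, (∑ a, μp.prob x a * ∫ r, f ((x, a), r) ∂D (x, a))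
      = ∑ a, μp.prob x a * (impW μp πp (x, a) * rstar D (x, a)) := by
    intro x
    simp_rw [hmean]
    have expand : ∀ a : A, μp.prob x a * (impW μp πp (x, a) * (rstar D (x, a) - rhat (x, a))
          + (∑ b, πp.prob x b * rhat (x, b)))
        = μp.prob x a * (impW μp πp (x, a) * rstar D (x, a))
          - (μp.prob x a * impW μp πp (x, a)) * rhat (x, a)
          + (∑ b, πp.prob x b * rhat (x, b)) * μp.prob x a := fun a => by ring
    simp_rw [expand, hpw]
    rw [Finset.sum_add_distrib, Finset.sum_sub_distrib, ← Finset.mul_sum, μp.sum_one, mul_one]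
    ring
  have hvpiG : vpi lam πp D
      = ∫ x, (∑ a, μp.prob x a * (impW μp πp (x, a) * rstar D (x, a))) ∂lam := by
    rw [vpi]
    refine integral_congr_ae (Filter.Eventually.of_forall fun x => ?_)
    refine Finset.sum_congr rfl fun a _ => ?_
    rw [← hpw x a]
    ring
  -- sum of importance weights times u
  have hU : ∀ x, (∑ a, μp.prob x a * (impW μp πp (x, a) * (rhat (x, a) - rstar D (x, a))))
      = (∑ b, πp.prob x b * rhat (x, b))
        - ∑ a, μp.prob x a * (impW μp πp (x, a) * rstar D (x, a)) := by
    intro x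
    have expand : ∀ a : A, μp.prob x a * (impW μp πp (x, a) * (rhat (x, a) - rstar D (x, a)))
        = (μp.prob x a * impW μp πp (x, a)) * rhat (x, a)
          - μp.prob x a * (impW μp πp (x, a) * rstar D (x, a)) := fun a => by ring
    simp_rw [expand, hpw]
    rw [Finset.sum_sub_distrib]
  -- sum of conditional second moments
  have hSsum : ∀ x, (∑ a, μp.prob x a * ∫ r, (f ((x, a), r)) ^ 2 ∂D (x, a))
      = (∑ a, μp.prob x a * (impW μp πp (x, a) ^ 2 * variance id (D (x, a))))
        + (((∑ a, μp.prob x a * (impW μp πp (x, a) * (rhat (x, a) - rstar D (x, a))) ^ 2)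
            - (∑ a, μp.prob x a * (impW μp πp (x, a) * (rhat (x, a) - rstar D (x, a)))) ^ 2)
          + (∑ a, μp.prob x a * (impW μp πp (x, a) * rstar D (x, a))) ^ 2) := by
    intro x
    simp_rw [hsqr]
    have expand : ∀ a : A, μp.prob x a * (impW μp πp (x, a) ^ 2 * variance id (D (x, a))
          + (impW μp πp (x, a) * (rstar D (x, a) - rhat (x, a))
              + (∑ b, πp.prob x b * rhat (x, b))) ^ 2)
        = μp.prob x a * (impW μp πp (x, a) ^ 2 * variance id (D (x, a)))
          + (μp.prob x a * (impW μp πp (x, a) * (rhat (x, a) - rstar D (x, a))) ^ 2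
            - 2 * (∑ b, πp.prob x b * rhat (x, b))
                * (μp.prob x a * (impW μp πp (x, a) * (rhat (x, a) - rstar D (x, a))))
            + (∑ b, πp.prob x b * rhat (x, b)) ^ 2 * μp.prob x a) := fun a => by ring
    simp_rw [expand]
    rw [Finset.sum_add_distrib, Finset.sum_add_distrib, Finset.sum_sub_distrib,
      ← Finset.mul_sum, ← Finset.mul_sum, μp.sum_one, mul_one, hU x]
    ring
  -- the two applications of the sample-integral formula
  obtain ⟨hint1, hI1⟩ := integral_sample lam μp D hf1
  obtain ⟨hint2, hI2⟩ := integral_sample lam μp D hf2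
  have hIf : (∫ s, f s ∂P)
      = ∫ x, (∑ a, μp.prob x a * (impW μp πp (x, a) * rstar D (x, a))) ∂lam := by
    rw [hI1]
    exact integral_congr_ae (Filter.Eventually.of_forall fun x => hGsum x)
  have hSint : Integrable (fun x => ∑ a, μp.prob x a * ∫ r, (f ((x, a), r)) ^ 2 ∂D (x, a)) lam :=
    integrable_finset_sum _ fun a _ => hint2 a
  have hTG2 : Integrable (fun x =>
      (((∑ a, μp.prob x a * (impW μp πp (x, a) * (rhat (x, a) - rstar D (x, a))) ^ 2)
          - (∑ a, μp.prob x a * (impW μp πp (x, a) * (rhat (x, a) - rstar D (x, a)))) ^ 2)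
        + (∑ a, μp.prob x a * (impW μp πp (x, a) * rstar D (x, a))) ^ 2)) lam := by
    have heq : (fun x =>
        (((∑ a, μp.prob x a * (impW μp πp (x, a) * (rhat (x, a) - rstar D (x, a))) ^ 2)
            - (∑ a, μp.prob x a * (impW μp πp (x, a) * (rhat (x, a) - rstar D (x, a)))) ^ 2)
          + (∑ a, μp.prob x a * (impW μp πp (x, a) * rstar D (x, a))) ^ 2))
        = fun x => (∑ a, μp.prob x a * ∫ r, (f ((x, a), r)) ^ 2 ∂D (x, a))
            - ∑ a, μp.prob x a * (impW μp πp (x, a) ^ 2 * variance id (D (x, a))) := by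
      funext x
      rw [hSsum x]
      ring
    rw [heq]
    exact hSint.sub h3
  have hIf2 : (∫ s, f s ^ 2 ∂P)
      = (∫ x, (∑ a, μp.prob x a * (impW μp πp (x, a) ^ 2 * variance id (D (x, a)))) ∂lam)
        + ((∫ x, ((∑ a, μp.prob x a * (impW μp πp (x, a) * (rhat (x, a) - rstar D (x, a))) ^ 2)
              - (∑ a, μp.prob x a * (impW μp πp (x, a) * (rhat (x, a) - rstar D (x, a)))) ^ 2) ∂lam)
          + ∫ x, (∑ a, μp.prob x a * (impW μp πp (x, a) * rstar D (x, a))) ^ 2 ∂lam) := by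
    rw [hI2]
    rw [integral_congr_ae (Filter.Eventually.of_forall fun x => hSsum x)]
    rw [integral_add h3 hTG2, integral_add h4 h2.integrable_sq]
  have hvarG : variance (fun x => ∑ a, μp.prob x a * (impW μp πp (x, a) * rstar D (x, a))) lam
      = (∫ x, (∑ a, μp.prob x a * (impW μp πp (x, a) * rstar D (x, a))) ^ 2 ∂lam)
        - (∫ x, (∑ a, μp.prob x a * (impW μp πp (x, a) * rstar D (x, a))) ∂lam) ^ 2 := by
    rw [variance_eq_sub h2]
    congr 1
  have hvarf : variance f P = (∫ s, f s ^ 2 ∂P) - (∫ s, f s ∂P) ^ 2 := by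
    rw [variance_eq_sub h1]
    congr 1
  -- the i.i.d. part
  have hmp : ∀ i : Fin n, MeasurePreserving (fun ω : Fin n → (X × A) × ℝ => ω i)
      (Measure.pi fun _ : Fin n => P) P := fun i => measurePreserving_eval' _ i
  have hFmem : ∀ i : Fin n, MemLp (fun ω : Fin n → (X × A) × ℝ => f (ω i)) 2
      (Measure.pi fun _ : Fin n => P) := fun i => h1.comp_measurePreserving (hmp i)
  have htrans : ∀ (g : (X × A) × ℝ → ℝ), AEStronglyMeasurable g P →
      ∀ i : Fin n, (∫ ω, g (ω i) ∂(Measure.pi fun _ : Fin n => P)) = ∫ s, g s ∂P := by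
    intro g hg i
    have h := integral_map (μ := Measure.pi fun _ : Fin n => P)
      (measurable_pi_apply i).aemeasurable (f := g) (by rwa [(hmp i).map_eq])
    rw [(hmp i).map_eq] at h
    exact h.symm
  have hVeq : drEst μp πp rhat n = fun ω : Fin n → (X × A) × ℝ => (1 / n : ℝ) * ∑ i, f (ω i) := by
    funext ω
    simp only [drEst, hfdef]
  have hVint : (∫ ω, drEst μp πp rhat n ω ∂(Measure.pi fun _ : Fin n => P)) = ∫ s, f s ∂P := by
    simp_rw [hVeq]
    rw [integral_const_mul, integral_finset_sum _ fun i _ => (hFmem i).integrable one_le_two]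
    simp_rw [htrans f h1.aestronglyMeasurable]
    rw [Finset.sum_const, Finset.card_univ, Fintype.card_fin, nsmul_eq_mul]
    field_simp
  have hsmul : drEst μp πp rhat n
      = (1 / n : ℝ) • (∑ i : Fin n, fun ω : Fin n → (X × A) × ℝ => f (ω i)) := by
    funext ω
    simp only [Pi.smul_apply, Finset.sum_apply, smul_eq_mul, hVeq]
  have hVmem : MemLp (drEst μp πp rhat n) 2 (Measure.pi fun _ : Fin n => P) := by
    rw [hsmul]
    exact (memLp_finset_sum' _ fun i _ => hFmem i).const_smul _
  have hv : vpi lam πp D = ∫ ω, drEst μp πp rhat n ω ∂(Measure.pi fun _ : Fin n => P) := by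
    rw [hVint, hIf, ← hvpiG]
  have hMSE : (∫ ω, (drEst μp πp rhat n ω - vpi lam πp D) ^ 2
        ∂(Measure.pi fun _ : Fin n => P))
      = variance (drEst μp πp rhat n) (Measure.pi fun _ : Fin n => P) := by
    rw [variance_eq_integral hVmem.aestronglyMeasurable.aemeasurable]
    refine integral_congr_ae (Filter.Eventually.of_forall fun ω => ?_)
    simp only [Pi.pow_apply, Pi.sub_apply]
    rw [← hv]
  have hvi : ∀ i : Fin n, variance (fun ω : Fin n → (X × A) × ℝ => f (ω i))
      (Measure.pi fun _ : Fin n => P) = variance f P := by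
    intro i
    rw [variance_eq_sub (hFmem i), variance_eq_sub h1]
    have e1 : (∫ ω, ((fun ω : Fin n → (X × A) × ℝ => f (ω i)) ^ 2) ω
          ∂(Measure.pi fun _ : Fin n => P)) = ∫ s, (f ^ 2) s ∂P := by
      have h := htrans (fun s => f s ^ 2) hf2.1 i
      simpa [Pi.pow_apply] using h
    have e2 : (∫ ω, (fun ω : Fin n → (X × A) × ℝ => f (ω i)) ω
          ∂(Measure.pi fun _ : Fin n => P)) = ∫ s, f s ∂P := htrans f h1.aestronglyMeasurable i
    rw [e1, e2]
  have hvarsum : variance (drEst μp πp rhat n) (Measure.pi fun _ : Fin n => P)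
      = (1 / n : ℝ) * variance f P := by
    rw [hsmul, variance_smul]
    have hps : Set.Pairwise ↑(Finset.univ : Finset (Fin n))
        (fun i j => IndepFun (fun ω : Fin n → (X × A) × ℝ => f (ω i))
          (fun ω : Fin n → (X × A) × ℝ => f (ω j)) (Measure.pi fun _ : Fin n => P)) := by
      intro i _ j _ hij
      exact (indepFun_eval _ hij).comp hfmeas hfmeas
    rw [IndepFun.variance_sum (fun i _ => hFmem i) hps]
    simp_rw [hvi]
    rw [Finset.sum_const, Finset.card_univ, Fintype.card_fin, nsmul_eq_mul]
    field_simp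
  rw [hMSE, hvarsum, hvarf, hIf2, hIf]
  rw [show Emu lam μp (fun p => impW μp πp p ^ 2 * variance id (D p))
      = ∫ x, (∑ a, μp.prob x a * (impW μp πp (x, a) ^ 2 * variance id (D (x, a)))) ∂lam from rfl]
  rw [hvarG]
  ring
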